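/- Let R be an algebraic curvature tensor on a 4-dimensional real inner product space V. Then R is Einstein (i.e., Ric = λ⟨·,·⟩ for some real λ) if and only if for every 2-dimensional subspace W ⊂ V, the sectional curvature of W equals the sectional curvature of its orthogonal complement: K(W) = K(W^⊥). -/

import Mathlib

set_option maxHeartbeats 1000000

open scoped RealInnerProductSpace

section EinsteinHelpers

variable {V : Type*} [NormedAddCommGroup V] [InnerProductSpace ℝ V]

private lemma Rz1 (R : V →ₗ[ℝ] V →ₗ[ℝ] V →ₗ[ℝ] V →ₗ[ℝ] ℝ)
    (hanti : ∀ x y z w : V, R x y z w = - R y x z w) (x z w : V) :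
    R x x z w = 0 := by
  have := hanti x x z w; linarith

private lemma Rz2 (R : V →ₗ[ℝ] V →ₗ[ℝ] V →ₗ[ℝ] V →ₗ[ℝ] ℝ)
    (hanti : ∀ x y z w : V, R x y z w = - R y x z w)
    (hpair : ∀ x y z w : V, R x y z w = R z w x y) (x y z : V) :
    R x y z z = 0 := by
  rw [hpair]; exact Rz1 R hanti z x y

private lemma Rsw (R : V →ₗ[ℝ] V →ₗ[ℝ] V →ₗ[ℝ] V →ₗ[ℝ] ℝ)
    (hanti : ∀ x y z w : V, R x y z w = - R y x z w)
    (hpair : ∀ x y z w : V, R x y z w = R z w x y) (x y : V) :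
    R y x y x = R x y x y := by
  have h1 := hanti y x y x
  have h2 := hpair x y y x
  have h3 := hanti y x x y
  have h4 := hpair x y x y
  linarith

private lemma Rsw2 (R : V →ₗ[ℝ] V →ₗ[ℝ] V →ₗ[ℝ] V →ₗ[ℝ] ℝ)
    (hpair : ∀ x y z w : V, R x y z w = R z w x y) (x y z : V) :
    R x z y z = R y z x z := hpair x z y z

private lemma norm_one_of_inner (x : V) (hx : ⟪x, x⟫ = 1) : ‖x‖ = 1 := by
  have := real_inner_self_eq_norm_sq x
  rw [hx] at this
  nlinarith [norm_nonneg x]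

private lemma span_pair_finrank (c d : V) (hcc : ⟪c, c⟫ = 1) (hdd : ⟪d, d⟫ = 1)
    (hcd : ⟪c, d⟫ = 0) :
    Module.finrank ℝ (Submodule.span ℝ ({c, d} : Set V)) = 2 := by
  have hon : Orthonormal ℝ ![c, d] := by
    rw [orthonormal_iff_ite]
    intro i j
    have hdc : ⟪d, c⟫ = 0 := (real_inner_comm c d).trans hcd
    fin_cases i <;> fin_cases j <;> simp [hcc, hdd, hcd, hdc, norm_one_of_inner c hcc, norm_one_of_inner d hdd]
  have hr : Set.range ![c, d] = ({c, d} : Set V) := by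
    ext x
    simp [Fin.exists_fin_two]; tauto
  have := finrank_span_eq_card hon.linearIndependent
  rw [hr] at this
  simpa using this

private lemma span_perp [FiniteDimensional ℝ V] (hdim : Module.finrank ℝ V = 4)
    (a b c d : V)
    (haa : ⟪a, a⟫ = 1) (hbb : ⟪b, b⟫ = 1) (hcc : ⟪c, c⟫ = 1) (hdd : ⟪d, d⟫ = 1)
    (hab : ⟪a, b⟫ = 0) (hac : ⟪a, c⟫ = 0) (had : ⟪a, d⟫ = 0)
    (hbc : ⟪b, c⟫ = 0) (hbd : ⟪b, d⟫ = 0) (hcd : ⟪c, d⟫ = 0) :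
    Submodule.span ℝ ({c, d} : Set V) = (Submodule.span ℝ ({a, b} : Set V))ᗮ := by
  have key : ∀ x : V, ⟪a, x⟫ = 0 → ⟪b, x⟫ = 0 →
      x ∈ (Submodule.span ℝ ({a, b} : Set V))ᗮ := by
    intro x h1 h2
    rw [Submodule.mem_orthogonal]
    intro u hu
    obtain ⟨m, n, rfl⟩ := Submodule.mem_span_pair.mp hu
    simp [inner_add_left, inner_smul_left, h1, h2]
  have hle : Submodule.span ℝ ({c, d} : Set V) ≤ (Submodule.span ℝ ({a, b} : Set V))ᗮ := by
    rw [Submodule.span_le]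
    rintro x (rfl | rfl)
    · exact key _ hac hbc
    · exact key _ had hbd
  refine Submodule.eq_of_le_of_finrank_eq hle ?_
  have h1 : Module.finrank ℝ (Submodule.span ℝ ({c, d} : Set V)) = 2 :=
    span_pair_finrank c d hcc hdd hcd
  have h2 : Module.finrank ℝ (Submodule.span ℝ ({a, b} : Set V)) = 2 :=
    span_pair_finrank a b haa hbb hab
  have h3 := Submodule.finrank_add_finrank_orthogonal (Submodule.span ℝ ({a, b} : Set V))
  rw [h2, hdim] at h3
  omega

private lemma trace_indep (R : V →ₗ[ℝ] V →ₗ[ℝ] V →ₗ[ℝ] V →ₗ[ℝ] ℝ)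
    (e f : OrthonormalBasis (Fin 4) ℝ V) (x y : V) :
    ∑ i, R x (e i) y (e i) = ∑ i, R x (f i) y (f i) := by
  have he : ∀ i : Fin 4, (e i : V) = ∑ j, ⟪f j, e i⟫ • f j := fun i =>
    (f.sum_repr' (e i)).symm
  calc ∑ i, R x (e i) y (e i)
      = ∑ i, ∑ j, ∑ k, ⟪f j, e i⟫ * ⟪f k, e i⟫ * R x (f k) y (f j) := by
        refine Finset.sum_congr rfl fun i _ => ?_
        conv_lhs => rw [he i]
        simp only [map_sum, map_smul, LinearMap.sum_apply, LinearMap.smul_apply,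
          smul_eq_mul, Finset.mul_sum, Finset.sum_mul]
        refine Finset.sum_congr rfl fun j _ => Finset.sum_congr rfl fun k _ => by ring
    _ = ∑ j, ∑ k, (∑ i, ⟪f j, e i⟫ * ⟪f k, e i⟫) * R x (f k) y (f j) := by
        rw [Finset.sum_comm]
        refine Finset.sum_congr rfl fun j _ => ?_
        rw [Finset.sum_comm]
        refine Finset.sum_congr rfl fun k _ => ?_
        rw [Finset.sum_mul]
    _ = ∑ j, ∑ k, ⟪f j, f k⟫ * R x (f k) y (f j) := by
        refine Finset.sum_congr rfl fun j _ => Finset.sum_congr rfl fun k _ => ?_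
        congr 1
        calc ∑ i, ⟪f j, e i⟫ * ⟪f k, e i⟫ = ∑ i, ⟪f j, e i⟫ * ⟪e i, f k⟫ := by
              refine Finset.sum_congr rfl fun i _ => ?_
              rw [real_inner_comm (e i) (f k)]
          _ = ⟪f j, f k⟫ := e.sum_inner_mul_inner _ _
    _ = ∑ j, R x (f j) y (f j) := by
        refine Finset.sum_congr rfl fun j _ => ?_
        rw [Finset.sum_eq_single j]
        · rw [orthonormal_iff_ite.mp f.orthonormal]; simp
        · intro k _ hk
          rw [orthonormal_iff_ite.mp f.orthonormal]
          simp [Ne.symm hk]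
        · simp

private lemma ric_ext (R : V →ₗ[ℝ] V →ₗ[ℝ] V →ₗ[ℝ] V →ₗ[ℝ] ℝ)
    (e : OrthonormalBasis (Fin 4) ℝ V) (lam : ℝ)
    (hjk : ∀ j k : Fin 4, ∑ i, R (e j) (e i) (e k) (e i) = lam * ⟪e j, e k⟫)
    (x y : V) : ∑ i, R x (e i) y (e i) = lam * ⟪x, y⟫ := by
  let B : V →ₗ[ℝ] V →ₗ[ℝ] ℝ := LinearMap.mk₂ ℝ (fun x y => ∑ i, R x (e i) y (e i))
    (fun m1 m2 y => by simp [Finset.sum_add_distrib])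
    (fun c m y => by simp [Finset.mul_sum])
    (fun x y1 y2 => by simp [Finset.sum_add_distrib])
    (fun c x y => by simp [Finset.mul_sum])
  let C : V →ₗ[ℝ] V →ₗ[ℝ] ℝ := LinearMap.mk₂ ℝ (fun x y => lam * ⟪x, y⟫)
    (fun m1 m2 y => by simp [inner_add_left]; ring)
    (fun c m y => by simp [inner_smul_left]; ring)
    (fun x y1 y2 => by simp [inner_add_right]; ring)
    (fun c x y => by simp [inner_smul_right]; ring)
  have hBC : B = C := by
    refine Module.Basis.ext e.toBasis fun j => Module.Basis.ext e.toBasis fun k => ?_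
    simpa [B, C] using hjk j k
  have := LinearMap.congr_fun (LinearMap.congr_fun hBC x) y
  simpa [B, C] using this

section Main

variable [FiniteDimensional ℝ V] (hdim : Module.finrank ℝ V = 4)
  (R : V →ₗ[ℝ] V →ₗ[ℝ] V →ₗ[ℝ] V →ₗ[ℝ] ℝ)
  (h : ∀ u v u' v' : V,
        ⟪u, u⟫ = 1 → ⟪v, v⟫ = 1 → ⟪u, v⟫ = 0 →
        ⟪u', u'⟫ = 1 → ⟪v', v'⟫ = 1 → ⟪u', v'⟫ = 0 →
        Submodule.span ℝ ({u', v'} : Set V) =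
          (Submodule.span ℝ ({u, v} : Set V))ᗮ →
        R u v u v = R u' v' u' v')

include hdim h in
private lemma hK (a b c d : V)
    (haa : ⟪a, a⟫ = 1) (hbb : ⟪b, b⟫ = 1) (hcc : ⟪c, c⟫ = 1) (hdd : ⟪d, d⟫ = 1)
    (hab : ⟪a, b⟫ = 0) (hac : ⟪a, c⟫ = 0) (had : ⟪a, d⟫ = 0)
    (hbc : ⟪b, c⟫ = 0) (hbd : ⟪b, d⟫ = 0) (hcd : ⟪c, d⟫ = 0) :
    R a b a b = R c d c d :=
  h a b c d haa hbb hab hcc hdd hcd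
    (span_perp hdim a b c d haa hbb hcc hdd hab hac had hbc hbd hcd)

include hdim h in
private lemma K2 (hpair : ∀ x y z w : V, R x y z w = R z w x y)
    (a b c d : V)
    (haa : ⟪a, a⟫ = 1) (hbb : ⟪b, b⟫ = 1) (hcc : ⟪c, c⟫ = 1) (hdd : ⟪d, d⟫ = 1)
    (hab : ⟪a, b⟫ = 0) (hac : ⟪a, c⟫ = 0) (had : ⟪a, d⟫ = 0)
    (hbc : ⟪b, c⟫ = 0) (hbd : ⟪b, d⟫ = 0) (hcd : ⟪c, d⟫ = 0) :
    R a c b c + R a d b d = 0 := by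
  set s : ℝ := (Real.sqrt 2)⁻¹ with hsdef
  have hs2 : s * s = 1/2 := by
    rw [hsdef, ← mul_inv]
    rw [Real.mul_self_sqrt (by norm_num)]
    norm_num
  have hba : ⟪b, a⟫ = 0 := (real_inner_comm a b).trans hab
  have hca : ⟪c, a⟫ = 0 := (real_inner_comm a c).trans hac
  have hcb : ⟪c, b⟫ = 0 := (real_inner_comm b c).trans hbc
  have hda : ⟪d, a⟫ = 0 := (real_inner_comm a d).trans had
  have hdb : ⟪d, b⟫ = 0 := (real_inner_comm b d).trans hbd
  have hdc : ⟪d, c⟫ = 0 := (real_inner_comm c d).trans hcd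
  have hpp : ⟪s • (a + b), s • (a + b)⟫ = 1 := by
    simp only [inner_smul_left, inner_smul_right, inner_add_left, inner_add_right,
      haa, hbb, hab, hba, conj_trivial]
    nlinarith [hs2]
  have hqq : ⟪s • (a - b), s • (a - b)⟫ = 1 := by
    simp only [inner_smul_left, inner_smul_right, inner_sub_left, inner_sub_right,
      haa, hbb, hab, hba, conj_trivial]
    nlinarith [hs2]
  have hpq : ⟪s • (a + b), s • (a - b)⟫ = 0 := by
    simp [inner_smul_left, inner_smul_right, inner_sub_left, inner_sub_right,
      inner_add_left, inner_add_right, haa, hbb, hab, hba, norm_one_of_inner a haa,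
      norm_one_of_inner b hbb]
  have hpc : ⟪s • (a + b), c⟫ = 0 := by
    simp [inner_smul_left, inner_add_left, hac, hbc]
  have hpd : ⟪s • (a + b), d⟫ = 0 := by
    simp [inner_smul_left, inner_add_left, had, hbd]
  have hqc : ⟪s • (a - b), c⟫ = 0 := by
    simp [inner_smul_left, inner_sub_left, hac, hbc]
  have hqd : ⟪s • (a - b), d⟫ = 0 := by
    simp [inner_smul_left, inner_sub_left, had, hbd]
  have hcq : ⟪c, s • (a - b)⟫ = 0 := by
    simp [inner_smul_right, inner_sub_right, hca, hcb]
  have hdq : ⟪d, s • (a - b)⟫ = 0 := by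
    simp [inner_smul_right, inner_sub_right, hda, hdb]
  have e1 : R (s • (a + b)) c (s • (a + b)) c = R (s • (a - b)) d (s • (a - b)) d :=
    hK hdim R h _ c _ d hpp hcc hqq hdd hpc hpq hpd hcq hcd hqd
  have e2 : R (s • (a + b)) d (s • (a + b)) d = R (s • (a - b)) c (s • (a - b)) c :=
    hK hdim R h _ d _ c hpp hdd hqq hcc hpd hpq hpc hdq hdc hqc
  have x1 : R (s • (a + b)) c (s • (a + b)) c
      = s * s * (R a c a c + R a c b c + R b c a c + R b c b c) := by
    simp only [map_add, map_smul, LinearMap.add_apply, LinearMap.smul_apply, smul_eq_mul]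
    ring
  have x2 : R (s • (a - b)) d (s • (a - b)) d
      = s * s * (R a d a d - R a d b d - R b d a d + R b d b d) := by
    simp only [map_add, map_sub, map_smul, LinearMap.add_apply, LinearMap.sub_apply,
      LinearMap.smul_apply, smul_eq_mul, sub_eq_add_neg, ← neg_one_smul ℝ b]
    ring
  have x3 : R (s • (a + b)) d (s • (a + b)) d
      = s * s * (R a d a d + R a d b d + R b d a d + R b d b d) := by
    simp only [map_add, map_smul, LinearMap.add_apply, LinearMap.smul_apply, smul_eq_mul]
    ring
  have x4 : R (s • (a - b)) c (s • (a - b)) c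
      = s * s * (R a c a c - R a c b c - R b c a c + R b c b c) := by
    simp only [map_add, map_sub, map_smul, LinearMap.add_apply, LinearMap.sub_apply,
      LinearMap.smul_apply, smul_eq_mul, sub_eq_add_neg, ← neg_one_smul ℝ b]
    ring
  rw [x1, x2] at e1
  rw [x3, x4] at e2
  rw [hs2] at e1 e2
  have p1 : R b c a c = R a c b c := hpair b c a c
  have p2 : R b d a d = R a d b d := hpair b d a d
  linarith

include hdim h in
private lemma ric_basis
    (hanti : ∀ x y z w : V, R x y z w = - R y x z w)
    (hpair : ∀ x y z w : V, R x y z w = R z w x y)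
    (e : OrthonormalBasis (Fin 4) ℝ V) (j k : Fin 4) :
    ∑ i, R (e j) (e i) (e k) (e i)
      = (∑ i, R (e 0) (e i) (e 0) (e i)) * ⟪e j, e k⟫ := by
  have hOn := orthonormal_iff_ite.mp e.orthonormal
  have i00 : ⟪e 0, e 0⟫ = 1 := by simpa using hOn 0 0
  have i11 : ⟪e 1, e 1⟫ = 1 := by simpa using hOn 1 1
  have i22 : ⟪e 2, e 2⟫ = 1 := by simpa using hOn 2 2
  have i33 : ⟪e 3, e 3⟫ = 1 := by simpa using hOn 3 3
  have i01 : ⟪e 0, e 1⟫ = 0 := by simpa using hOn 0 1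
  have i02 : ⟪e 0, e 2⟫ = 0 := by simpa using hOn 0 2
  have i03 : ⟪e 0, e 3⟫ = 0 := by simpa using hOn 0 3
  have i12 : ⟪e 1, e 2⟫ = 0 := by simpa using hOn 1 2
  have i13 : ⟪e 1, e 3⟫ = 0 := by simpa using hOn 1 3
  have i23 : ⟪e 2, e 3⟫ = 0 := by simpa using hOn 2 3
  have i10 : ⟪e 1, e 0⟫ = 0 := by simpa using hOn 1 0
  have i20 : ⟪e 2, e 0⟫ = 0 := by simpa using hOn 2 0
  have i30 : ⟪e 3, e 0⟫ = 0 := by simpa using hOn 3 0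
  have i21 : ⟪e 2, e 1⟫ = 0 := by simpa using hOn 2 1
  have i31 : ⟪e 3, e 1⟫ = 0 := by simpa using hOn 3 1
  have i32 : ⟪e 3, e 2⟫ = 0 := by simpa using hOn 3 2
  have F1 : R (e 0) (e 1) (e 0) (e 1) = R (e 2) (e 3) (e 2) (e 3) :=
    hK hdim R h _ _ _ _ i00 i11 i22 i33 i01 i02 i03 i12 i13 i23
  have F2 : R (e 0) (e 2) (e 0) (e 2) = R (e 1) (e 3) (e 1) (e 3) :=
    hK hdim R h _ _ _ _ i00 i22 i11 i33 i02 i01 i03 i21 i23 i13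
  have F3 : R (e 0) (e 3) (e 0) (e 3) = R (e 1) (e 2) (e 1) (e 2) :=
    hK hdim R h _ _ _ _ i00 i33 i11 i22 i03 i01 i02 i31 i32 i12
  have O01 : R (e 0) (e 2) (e 1) (e 2) + R (e 0) (e 3) (e 1) (e 3) = 0 :=
    K2 hdim R h hpair _ _ _ _ i00 i11 i22 i33 i01 i02 i03 i12 i13 i23
  have O02 : R (e 0) (e 1) (e 2) (e 1) + R (e 0) (e 3) (e 2) (e 3) = 0 :=
    K2 hdim R h hpair _ _ _ _ i00 i22 i11 i33 i02 i01 i03 i21 i23 i13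
  have O03 : R (e 0) (e 1) (e 3) (e 1) + R (e 0) (e 2) (e 3) (e 2) = 0 :=
    K2 hdim R h hpair _ _ _ _ i00 i33 i11 i22 i03 i01 i02 i31 i32 i12
  have O12 : R (e 1) (e 0) (e 2) (e 0) + R (e 1) (e 3) (e 2) (e 3) = 0 :=
    K2 hdim R h hpair _ _ _ _ i11 i22 i00 i33 i12 i10 i13 i20 i23 i03
  have O13 : R (e 1) (e 0) (e 3) (e 0) + R (e 1) (e 2) (e 3) (e 2) = 0 :=
    K2 hdim R h hpair _ _ _ _ i11 i33 i00 i22 i13 i10 i12 i30 i32 i02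
  have O23 : R (e 2) (e 0) (e 3) (e 0) + R (e 2) (e 1) (e 3) (e 1) = 0 :=
    K2 hdim R h hpair _ _ _ _ i22 i33 i00 i11 i23 i20 i21 i30 i31 i01
  have Z := Rz1 R hanti
  have Z2 := Rz2 R hanti hpair
  have SW := Rsw R hanti hpair
  have SW2 := Rsw2 R hpair
  have c00 : ∑ i, R (e 0) (e i) (e 0) (e i)
      = (∑ i, R (e 0) (e i) (e 0) (e i)) * ⟪e 0, e 0⟫ := by
    rw [i00, mul_one]
  have c01 : ∑ i, R (e 0) (e i) (e 1) (e i)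
      = (∑ i, R (e 0) (e i) (e 0) (e i)) * ⟪e 0, e 1⟫ := by
    simp only [Fin.sum_univ_four]; rw [i01]
    linarith [Z (e 0) (e 1) (e 0), Z2 (e 0) (e 1) (e 1), O01]
  have c02 : ∑ i, R (e 0) (e i) (e 2) (e i)
      = (∑ i, R (e 0) (e i) (e 0) (e i)) * ⟪e 0, e 2⟫ := by
    simp only [Fin.sum_univ_four]; rw [i02]
    linarith [Z (e 0) (e 2) (e 0), Z2 (e 0) (e 2) (e 2), O02]
  have c03 : ∑ i, R (e 0) (e i) (e 3) (e i)
      = (∑ i, R (e 0) (e i) (e 0) (e i)) * ⟪e 0, e 3⟫ := by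
    simp only [Fin.sum_univ_four]; rw [i03]
    linarith [Z (e 0) (e 3) (e 0), Z2 (e 0) (e 3) (e 3), O03]
  have c10 : ∑ i, R (e 1) (e i) (e 0) (e i)
      = (∑ i, R (e 0) (e i) (e 0) (e i)) * ⟪e 1, e 0⟫ := by
    simp only [Fin.sum_univ_four]; rw [i10]
    linarith [Z2 (e 1) (e 0) (e 0), Z (e 1) (e 0) (e 1),
      SW2 (e 1) (e 0) (e 2), SW2 (e 1) (e 0) (e 3), O01]
  have c11 : ∑ i, R (e 1) (e i) (e 1) (e i)
      = (∑ i, R (e 0) (e i) (e 0) (e i)) * ⟪e 1, e 1⟫ := by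
    simp only [Fin.sum_univ_four]; rw [i11, mul_one]
    linarith [SW (e 0) (e 1), Z (e 1) (e 1) (e 1), Z (e 0) (e 0) (e 0), F2, F3]
  have c12 : ∑ i, R (e 1) (e i) (e 2) (e i)
      = (∑ i, R (e 0) (e i) (e 0) (e i)) * ⟪e 1, e 2⟫ := by
    simp only [Fin.sum_univ_four]; rw [i12]
    linarith [Z (e 1) (e 2) (e 1), Z2 (e 1) (e 2) (e 2), O12]
  have c13 : ∑ i, R (e 1) (e i) (e 3) (e i)
      = (∑ i, R (e 0) (e i) (e 0) (e i)) * ⟪e 1, e 3⟫ := by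
    simp only [Fin.sum_univ_four]; rw [i13]
    linarith [Z (e 1) (e 3) (e 1), Z2 (e 1) (e 3) (e 3), O13]
  have c20 : ∑ i, R (e 2) (e i) (e 0) (e i)
      = (∑ i, R (e 0) (e i) (e 0) (e i)) * ⟪e 2, e 0⟫ := by
    simp only [Fin.sum_univ_four]; rw [i20]
    linarith [Z2 (e 2) (e 0) (e 0), Z (e 2) (e 0) (e 2),
      SW2 (e 2) (e 0) (e 1), SW2 (e 2) (e 0) (e 3), O02]
  have c21 : ∑ i, R (e 2) (e i) (e 1) (e i)
      = (∑ i, R (e 0) (e i) (e 0) (e i)) * ⟪e 2, e 1⟫ := by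
    simp only [Fin.sum_univ_four]; rw [i21]
    linarith [Z2 (e 2) (e 1) (e 1), Z (e 2) (e 1) (e 2),
      SW2 (e 2) (e 1) (e 0), SW2 (e 2) (e 1) (e 3), O12]
  have c22 : ∑ i, R (e 2) (e i) (e 2) (e i)
      = (∑ i, R (e 0) (e i) (e 0) (e i)) * ⟪e 2, e 2⟫ := by
    simp only [Fin.sum_univ_four]; rw [i22, mul_one]
    linarith [SW (e 0) (e 2), SW (e 1) (e 2), Z (e 2) (e 2) (e 2),
      Z (e 0) (e 0) (e 0), F1, F3]
  have c23 : ∑ i, R (e 2) (e i) (e 3) (e i)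
      = (∑ i, R (e 0) (e i) (e 0) (e i)) * ⟪e 2, e 3⟫ := by
    simp only [Fin.sum_univ_four]; rw [i23]
    linarith [Z (e 2) (e 3) (e 2), Z2 (e 2) (e 3) (e 3), O23]
  have c30 : ∑ i, R (e 3) (e i) (e 0) (e i)
      = (∑ i, R (e 0) (e i) (e 0) (e i)) * ⟪e 3, e 0⟫ := by
    simp only [Fin.sum_univ_four]; rw [i30]
    linarith [Z2 (e 3) (e 0) (e 0), Z (e 3) (e 0) (e 3),
      SW2 (e 3) (e 0) (e 1), SW2 (e 3) (e 0) (e 2), O03]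
  have c31 : ∑ i, R (e 3) (e i) (e 1) (e i)
      = (∑ i, R (e 0) (e i) (e 0) (e i)) * ⟪e 3, e 1⟫ := by
    simp only [Fin.sum_univ_four]; rw [i31]
    linarith [Z2 (e 3) (e 1) (e 1), Z (e 3) (e 1) (e 3),
      SW2 (e 3) (e 1) (e 0), SW2 (e 3) (e 1) (e 2), O13]
  have c32 : ∑ i, R (e 3) (e i) (e 2) (e i)
      = (∑ i, R (e 0) (e i) (e 0) (e i)) * ⟪e 3, e 2⟫ := by
    simp only [Fin.sum_univ_four]; rw [i32]
    linarith [Z2 (e 3) (e 2) (e 2), Z (e 3) (e 2) (e 3),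
      SW2 (e 3) (e 2) (e 0), SW2 (e 3) (e 2) (e 1), O23]
  have c33 : ∑ i, R (e 3) (e i) (e 3) (e i)
      = (∑ i, R (e 0) (e i) (e 0) (e i)) * ⟪e 3, e 3⟫ := by
    simp only [Fin.sum_univ_four]; rw [i33, mul_one]
    linarith [SW (e 0) (e 3), SW (e 1) (e 3), SW (e 2) (e 3), Z (e 3) (e 3) (e 3),
      Z (e 0) (e 0) (e 0), F1, F2]
  fin_cases j <;> fin_cases k <;>
    first
      | exact c00 | exact c01 | exact c02 | exact c03
      | exact c10 | exact c11 | exact c12 | exact c13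
      | exact c20 | exact c21 | exact c22 | exact c23
      | exact c30 | exact c31 | exact c32 | exact c33

end Main

end EinsteinHelpers

/-- An algebraic curvature tensor on a 4-dimensional real inner product space is
Einstein if and only if every 2-dimensional subspace has the same sectional
curvature as its orthogonal complement. -/
theorem einstein_iff_opposite_planes
    {V : Type*} [NormedAddCommGroup V] [InnerProductSpace ℝ V]
    [FiniteDimensional ℝ V] (hdim : Module.finrank ℝ V = 4)
    (R : V →ₗ[ℝ] V →ₗ[ℝ] V →ₗ[ℝ] V →ₗ[ℝ] ℝ)
    (hanti : ∀ x y z w : V, R x y z w = - R y x z w)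
    (hpair : ∀ x y z w : V, R x y z w = R z w x y)
    (hbianchi : ∀ x y z w : V, R x y z w + R y z x w + R z x y w = 0) :
    (∃ lam : ℝ, ∀ (e : OrthonormalBasis (Fin 4) ℝ V) (x y : V),
        ∑ i, R x (e i) y (e i) = lam * ⟪x, y⟫) ↔
    (∀ u v u' v' : V,
        ⟪u, u⟫ = 1 → ⟪v, v⟫ = 1 → ⟪u, v⟫ = 0 →
        ⟪u', u'⟫ = 1 → ⟪v', v'⟫ = 1 → ⟪u', v'⟫ = 0 →
        Submodule.span ℝ ({u', v'} : Set V) =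
          (Submodule.span ℝ ({u, v} : Set V))ᗮ →
        R u v u v = R u' v' u' v') := by
  constructor
  · rintro ⟨lam, hl⟩ u v u' v' huu hvv huv hu'u' hv'v' hu'v' hspan
    -- inner products between the two pairs
    have hmem : ∀ x ∈ ({u', v'} : Set V), x ∈ (Submodule.span ℝ ({u, v} : Set V))ᗮ := by
      intro x hx
      rw [← hspan]
      exact Submodule.subset_span hx
    have hu'mem := hmem u' (by simp)
    have hv'mem := hmem v' (by simp)
    have humem : u ∈ Submodule.span ℝ ({u, v} : Set V) := Submodule.subset_span (by simp)
    have hvmem : v ∈ Submodule.span ℝ ({u, v} : Set V) := Submodule.subset_span (by simp)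
    have huu' : ⟪u, u'⟫ = 0 := (Submodule.mem_orthogonal _ _).mp hu'mem u humem
    have hvu' : ⟪v, u'⟫ = 0 := (Submodule.mem_orthogonal _ _).mp hu'mem v hvmem
    have huv' : ⟪u, v'⟫ = 0 := (Submodule.mem_orthogonal _ _).mp hv'mem u humem
    have hvv' : ⟪v, v'⟫ = 0 := (Submodule.mem_orthogonal _ _).mp hv'mem v hvmem
    have hvu : ⟪v, u⟫ = 0 := (real_inner_comm u v).trans huv
    have hu'u : ⟪u', u⟫ = 0 := (real_inner_comm u u').trans huu'
    have hu'v : ⟪u', v⟫ = 0 := (real_inner_comm v u').trans hvu'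
    have hv'u : ⟪v', u⟫ = 0 := (real_inner_comm u v').trans huv'
    have hv'v : ⟪v', v⟫ = 0 := (real_inner_comm v v').trans hvv'
    have hv'u' : ⟪v', u'⟫ = 0 := (real_inner_comm u' v').trans hu'v'
    have hon : Orthonormal ℝ ![u, v, u', v'] := by
      rw [orthonormal_iff_ite]
      intro i j
      fin_cases i <;> fin_cases j <;>
        simp [huu, hvv, huv, hvu, hu'u', hv'v', hu'v', hv'u',
          huu', hvu', huv', hvv', hu'u, hu'v, hv'u, hv'v, norm_one_of_inner u huu,
          norm_one_of_inner v hvv, norm_one_of_inner u' hu'u', norm_one_of_inner v' hv'v']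
    have hsp : ⊤ ≤ Submodule.span ℝ (Set.range ![u, v, u', v']) := by
      rw [hon.linearIndependent.span_eq_top_of_card_eq_finrank (by simpa using hdim.symm)]
    have E : ∀ x y : V, ∑ i, R x (![u, v, u', v'] i) y (![u, v, u', v'] i) = lam * ⟪x, y⟫ := by
      intro x y
      have := hl (OrthonormalBasis.mk hon hsp) x y
      simpa [OrthonormalBasis.coe_mk] using this
    have E0 := E u u
    have E1 := E v v
    have E2 := E u' u'
    have E3 := E v' v'
    simp only [Fin.sum_univ_four, Matrix.cons_val_zero, Matrix.cons_val_one,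
      Matrix.head_cons, Matrix.cons_val_two, Matrix.tail_cons, Matrix.cons_val_three,
      huu, hvv, hu'u', hv'v', mul_one] at E0 E1 E2 E3
    have Z := Rz1 R hanti
    have SW := Rsw R hanti hpair
    linarith [E0, E1, E2, E3, Z u u u, Z v v v, Z u' u' u', Z v' v' v',
      SW u v, SW u u', SW u v', SW v u', SW v v', SW u' v',
      Z u (u) (u), Z v (v) (v)]
  · intro h
    have e0 : OrthonormalBasis (Fin 4) ℝ V :=
      (stdOrthonormalBasis ℝ V).reindex (finCongr hdim)
    refine ⟨∑ i, R (e0 0) (e0 i) (e0 0) (e0 i), fun e x y => ?_⟩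
    have hb : ∀ x y : V, ∑ i, R x (e i) y (e i)
        = (∑ i, R (e 0) (e i) (e 0) (e i)) * ⟪x, y⟫ :=
      ric_ext R e _ (ric_basis hdim R h hanti hpair e)
    have lameq : (∑ i, R (e0 0) (e0 i) (e0 0) (e0 i))
        = (∑ i, R (e 0) (e i) (e 0) (e i)) := by
      rw [trace_indep R e0 e (e0 0) (e0 0), hb (e0 0) (e0 0)]
      have h1 : ⟪e0 0, e0 0⟫ = 1 := by
        simpa using orthonormal_iff_ite.mp e0.orthonormal 0 0
      rw [h1, mul_one]
    rw [lameq]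
    exact hb x y
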